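/- Let 0 < q, κ ≠ 0, and let (z(t), f(t)) be differentiable complex-valued functions satisfying the characteristic ODE system z'(t) = f(t)/(f(t) − 1) and f'(t) = ln(q) · f(t) · (κ² q^{z(t)−t} + q^{−z(t)})/(κ² q^{z(t)−t} − q^{−z(t)}) on an interval, with f(t) ≠ 1 and κ² q^{z(t)−t} ≠ q^{−z(t)} throughout. Then both U(t) = q^t (f(t) q^{−z(t)} − κ² q^{z(t)−t})/(1 − f(t)) and V(t) = (q^{−z(t)} − f(t) κ² q^{z(t)−t})/(1 − f(t)) are constant (first integrals): U'(t) = 0 and V'(t) = 0. -/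

import Mathlib

/-- the two first integrals of the characteristic flow.  If
`z'(t) = f(t)/(f(t)−1)` and
`f'(t) = ln(q)·f(t)·(κ² q^{z(t)−t} + q^{−z(t)})/(κ² q^{z(t)−t} − q^{−z(t)})`,
with `f(t) ≠ 1` and `κ² q^{z(t)−t} ≠ q^{−z(t)}` throughout, then both
`U(t) = q^t (f q^{−z} − κ² q^{z−t})/(1−f)` and
`V(t) = (q^{−z} − f κ² q^{z−t})/(1−f)` have zero derivative (here
`q^w := exp(w ln q)`). -/
theorem characteristic_flow_first_integrals (q : ℝ) (hq : 0 < q) (κ : ℂ) (hκ : κ ≠ 0)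
    (s : Set ℝ) (z f : ℝ → ℂ)
    (hz : ∀ t ∈ s, HasDerivAt z (f t / (f t - 1)) t)
    (hf : ∀ t ∈ s, HasDerivAt f
      ((Real.log q : ℂ) * f t *
          (κ ^ 2 * Complex.exp ((z t - (t : ℂ)) * Real.log q) +
            Complex.exp (-z t * Real.log q)) /
        (κ ^ 2 * Complex.exp ((z t - (t : ℂ)) * Real.log q) -
          Complex.exp (-z t * Real.log q))) t)
    (hf1 : ∀ t ∈ s, f t ≠ 1)
    (hden : ∀ t ∈ s, κ ^ 2 * Complex.exp ((z t - (t : ℂ)) * Real.log q)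
      ≠ Complex.exp (-z t * Real.log q)) :
    ∀ t ∈ s,
      HasDerivAt (fun τ : ℝ => Complex.exp ((τ : ℂ) * Real.log q) *
          (f τ * Complex.exp (-z τ * Real.log q) -
            κ ^ 2 * Complex.exp ((z τ - (τ : ℂ)) * Real.log q)) /
          (1 - f τ)) 0 t ∧
      HasDerivAt (fun τ : ℝ =>
          (Complex.exp (-z τ * Real.log q) -
            f τ * κ ^ 2 * Complex.exp ((z τ - (τ : ℂ)) * Real.log q)) /
          (1 - f τ)) 0 t := by
  intro t ht
  have hf1t := hf1 t ht
  have h1f : (1 : ℂ) - f t ≠ 0 := sub_ne_zero.mpr fun h => hf1t h.symm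
  have hfm1 : f t - 1 ≠ 0 := sub_ne_zero.mpr hf1t
  have hdd : κ ^ 2 * Complex.exp ((z t - (t : ℂ)) * Real.log q)
      - Complex.exp (-z t * Real.log q) ≠ 0 := sub_ne_zero.mpr (hden t ht)
  have hzt := hz t ht
  have hft := hf t ht
  have hτ : HasDerivAt (fun τ : ℝ => (τ : ℂ)) 1 t := by
    exact (hasDerivAt_id t).ofReal_comp
  have ha : HasDerivAt (fun τ : ℝ => Complex.exp ((τ : ℂ) * (Real.log q : ℂ)))
      (Complex.exp ((t : ℂ) * Real.log q) * (1 * Real.log q)) t :=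
    (hτ.mul_const _).cexp
  have hb : HasDerivAt (fun τ : ℝ => Complex.exp (-z τ * (Real.log q : ℂ)))
      (Complex.exp (-z t * Real.log q) * (-(f t / (f t - 1)) * Real.log q)) t :=
    (hzt.neg.mul_const _).cexp
  have hc : HasDerivAt (fun τ : ℝ => Complex.exp ((z τ - (τ : ℂ)) * (Real.log q : ℂ)))
      (Complex.exp ((z t - (t : ℂ)) * Real.log q) *
        ((f t / (f t - 1) - 1) * Real.log q)) t :=
    ((hzt.sub hτ).mul_const _).cexp
  have hden1 : HasDerivAt (fun τ : ℝ => (1 : ℂ) - f τ) (0 - _) t :=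
    (hasDerivAt_const t (1 : ℂ)).sub hft
  set A := Complex.exp ((t : ℂ) * (Real.log q : ℂ)) with hA
  set B := Complex.exp (-z t * (Real.log q : ℂ)) with hB
  set C := Complex.exp ((z t - (t : ℂ)) * (Real.log q : ℂ)) with hC
  clear_value A B C
  constructor
  · have hU := (((ha.mul ((hft.mul hb).sub (hc.const_mul (κ ^ 2))))).div hden1 h1f)
    convert hU using 1
    · rfl
    · rfl
    simp only [Pi.mul_apply, Pi.sub_apply]
    rw [← hA, ← hB, ← hC, eq_comm, div_eq_zero_iff]
    left
    field_simp
    ring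
  · have hV := ((hb.sub ((hft.mul_const (κ ^ 2)).mul hc)).div hden1 h1f)
    convert hV using 1
    · rfl
    · rfl
    simp only [Pi.mul_apply, Pi.sub_apply]
    rw [← hB, ← hC, eq_comm, div_eq_zero_iff]
    left
    field_simp
    ring
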